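/- Let Φ : M_d(ℂ) → M_n(ℂ) be unital with Φ(X) = ∑_{i=1}^k φ_i(X) P_i, where the φ_i are distinct pure states on M_d(ℂ) and the P_i are mutually orthogonal nonzero projections summing to I_n. Suppose Ψ : M_d(ℂ) → M_m(ℂ) is a map in Holevo form Ψ(X) = ∑_{j=1}^ℓ ψ_j(X) R_j with distinct states ψ_j, R_j ⪰ 0, ∑ R_j = I_m, and V : ℂⁿ → ℂ^m is an isometry with V* Ψ(X) V = Φ(X) for all X. Then Ψ(X)(V x) ∈ V(ℂⁿ) for every x ∈ ℂⁿ and every X ∈ M_d(ℂ), i.e., the dilation is trivial. -/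

import Mathlib

open Matrix BigOperators
open scoped ComplexOrder

noncomputable section

/-- A state on `M_d(ℂ)`: a unital positive linear functional. -/
def IsState (d : ℕ) (φ : Matrix (Fin d) (Fin d) ℂ →ₗ[ℂ] ℂ) : Prop :=
  φ 1 = 1 ∧ ∀ A : Matrix (Fin d) (Fin d) ℂ, A.PosSemidef → 0 ≤ φ A

/-- A pure (extreme) state: it admits no proper convex decomposition into distinct states. -/
def IsPureState (d : ℕ) (φ : Matrix (Fin d) (Fin d) ℂ →ₗ[ℂ] ℂ) : Prop :=
  IsState d φ ∧ ∀ (σ τ : Matrix (Fin d) (Fin d) ℂ →ₗ[ℂ] ℂ) (t : ℝ),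
    IsState d σ → IsState d τ → 0 < t → t < 1 →
    (∀ X, φ X = (t : ℂ) * σ X + ((1 - t : ℝ) : ℂ) * τ X) → σ = τ

lemma sum_mulVec' {a b : ℕ} {ι : Type*} (s : Finset ι) (M : ι → Matrix (Fin a) (Fin b) ℂ)
    (v : Fin b → ℂ) : (∑ j ∈ s, M j) *ᵥ v = ∑ j ∈ s, M j *ᵥ v := by
  ext i
  simp only [mulVec, dotProduct, Finset.sum_apply, Matrix.sum_apply, Finset.sum_mul]
  exact Finset.sum_comm

lemma mulVec_sum' {a b : ℕ} {ι : Type*} (s : Finset ι) (M : Matrix (Fin a) (Fin b) ℂ)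
    (v : ι → Fin b → ℂ) : M *ᵥ (∑ j ∈ s, v j) = ∑ j ∈ s, M *ᵥ v j := by
  ext i
  simp only [mulVec, dotProduct, Finset.sum_apply, Finset.mul_sum]
  exact Finset.sum_comm

lemma dot_sum' {a : ℕ} {ι : Type*} (s : Finset ι) (v : Fin a → ℂ) (w : ι → Fin a → ℂ) :
    v ⬝ᵥ (∑ j ∈ s, w j) = ∑ j ∈ s, v ⬝ᵥ w j := by
  simp only [dotProduct, Finset.sum_apply, Finset.mul_sum]
  exact Finset.sum_comm

lemma conj_dot {m n : ℕ} (V : Matrix (Fin m) (Fin n) ℂ) (M : Matrix (Fin m) (Fin m) ℂ)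
    (u : Fin n → ℂ) :
    star (V *ᵥ u) ⬝ᵥ (M *ᵥ (V *ᵥ u)) = star u ⬝ᵥ ((Vᴴ * M * V) *ᵥ u) := by
  simp only [star_mulVec, dotProduct_mulVec, vecMul_vecMul, Matrix.mul_assoc]

/-- Key purity lemma. -/
lemma pure_convex {d ℓ : ℕ} (φi : Matrix (Fin d) (Fin d) ℂ →ₗ[ℂ] ℂ)
    (hpure : IsPureState d φi)
    (ψ : Fin ℓ → (Matrix (Fin d) (Fin d) ℂ →ₗ[ℂ] ℂ)) (hψ : ∀ j, IsState d (ψ j))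
    (c : Fin ℓ → ℝ) (hc : ∀ j, 0 ≤ c j) (s : ℝ) (hs : 0 < s)
    (hsum : ∑ j, c j = s)
    (hid : ∀ X, ∑ j, (c j : ℂ) * ψ j X = (s : ℂ) * φi X)
    (j0 : Fin ℓ) (hne : ψ j0 ≠ φi) : c j0 = 0 := by
  by_contra hc0
  have hcpos : 0 < c j0 := lt_of_le_of_ne (hc j0) (Ne.symm hc0)
  have hle : c j0 ≤ s := by
    rw [← hsum]
    exact Finset.single_le_sum (fun j _ => hc j) (Finset.mem_univ j0)
  rcases eq_or_lt_of_le hle with heq | hlt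
  · -- c j0 = s : all other coefficients vanish, φi = ψ j0
    have hrest : ∀ j ∈ Finset.univ.erase j0, c j = 0 := by
      intro j hj
      have h0 : ∑ j ∈ Finset.univ.erase j0, c j = 0 := by
        have := Finset.add_sum_erase Finset.univ c (Finset.mem_univ j0)
        rw [hsum, ← heq] at this
        linarith
      exact (Finset.sum_eq_zero_iff_of_nonneg (fun j _ => hc j)).mp h0 j hj
    have : φi = ψ j0 := by
      apply LinearMap.ext; intro X
      have h := hid X
      rw [← Finset.add_sum_erase Finset.univ _ (Finset.mem_univ j0),
        Finset.sum_eq_zero (fun j hj => by rw [hrest j hj]; simp), add_zero, heq] at h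
      have hs' : (s : ℂ) ≠ 0 := by exact_mod_cast hs.ne'
      exact (mul_left_cancel₀ hs' h).symm
    exact hne this.symm
  · -- 0 < c j0 < s : proper convex decomposition
    set t : ℝ := c j0 / s with ht
    have htpos : 0 < t := div_pos hcpos hs
    have htlt : t < 1 := (div_lt_one hs).mpr hlt
    set r : ℝ := s - c j0 with hr
    have hrpos : 0 < r := by simp [hr]; linarith
    set τ : Matrix (Fin d) (Fin d) ℂ →ₗ[ℂ] ℂ :=
      ((r : ℂ)⁻¹) • ∑ j ∈ Finset.univ.erase j0, (c j : ℂ) • ψ j with hτ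
    have hτapp : ∀ X, τ X = (r : ℂ)⁻¹ * ∑ j ∈ Finset.univ.erase j0, (c j : ℂ) * ψ j X := by
      intro X; simp [hτ, LinearMap.sum_apply, Finset.mul_sum]
    have hrC : (r : ℂ) ≠ 0 := by exact_mod_cast hrpos.ne'
    have hτstate : IsState d τ := by
      constructor
      · rw [hτapp]
        have : ∀ j ∈ Finset.univ.erase j0, (c j : ℂ) * ψ j 1 = (c j : ℂ) := by
          intro j _; rw [(hψ j).1, mul_one]
        rw [Finset.sum_congr rfl this]
        have : ∑ j ∈ Finset.univ.erase j0, (c j : ℂ) = (r : ℂ) := by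
          have := Finset.add_sum_erase Finset.univ c (Finset.mem_univ j0)
          rw [hsum] at this
          push_cast
          rw [← Finset.sum_congr rfl fun j _ => rfl]
          · exact_mod_cast (by linarith [this] : ∑ j ∈ Finset.univ.erase j0, c j = r)
        rw [this, inv_mul_cancel₀ hrC]
      · intro A hA
        rw [hτapp]
        apply mul_nonneg
        · rw [← Complex.ofReal_inv]
          exact_mod_cast (inv_nonneg.mpr hrpos.le)
        · apply Finset.sum_nonneg
          intro j _
          exact mul_nonneg (by exact_mod_cast hc j) ((hψ j).2 A hA)
    have hdecomp : ∀ X, φi X = (t : ℂ) * ψ j0 X + ((1 - t : ℝ) : ℂ) * τ X := by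
      intro X
      have h := hid X
      have hsC : (s : ℂ) ≠ 0 := by exact_mod_cast hs.ne'
      rw [← Finset.add_sum_erase Finset.univ _ (Finset.mem_univ j0)] at h
      have hφX : φi X = (s : ℂ)⁻¹ * ((c j0 : ℂ) * ψ j0 X +
          ∑ j ∈ Finset.univ.erase j0, (c j : ℂ) * ψ j X) := by
        rw [h]; field_simp
      rw [hφX, hτapp]
      have h1t : ((1 - t : ℝ) : ℂ) = (r : ℂ) / (s : ℂ) := by
        push_cast [ht, hr]
        field_simp
      rw [h1t]
      push_cast [ht]
      field_simp
    have := hpure.2 (ψ j0) τ t (hψ j0) hτstate htpos htlt hdecomp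
    apply hne
    apply LinearMap.ext; intro X
    have h := hdecomp X
    rw [← this] at h
    have : φi X = ((t : ℂ) + ((1-t : ℝ) : ℂ)) * ψ j0 X := by rw [h]; ring
    rw [this]
    push_cast
    ring_nf

theorem stmt9 {d n m k ℓ : ℕ}
    (Φ : Matrix (Fin d) (Fin d) ℂ →ₗ[ℂ] Matrix (Fin n) (Fin n) ℂ)
    (Ψ : Matrix (Fin d) (Fin d) ℂ →ₗ[ℂ] Matrix (Fin m) (Fin m) ℂ)
    (φ : Fin k → (Matrix (Fin d) (Fin d) ℂ →ₗ[ℂ] ℂ))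
    (P : Fin k → Matrix (Fin n) (Fin n) ℂ)
    (hΦunital : Φ 1 = 1)
    (hφ : ∀ i, IsPureState d (φ i))
    (hφdist : ∀ i j, φ i = φ j → i = j)
    (hproj : ∀ i, P i * P i = P i ∧ (P i)ᴴ = P i)
    (hPne : ∀ i, P i ≠ 0)
    (horth : ∀ i j, i ≠ j → P i * P j = 0)
    (hPsum : ∑ i, P i = 1)
    (hΦ : ∀ X, Φ X = ∑ i, φ i X • P i)
    (ψ : Fin ℓ → (Matrix (Fin d) (Fin d) ℂ →ₗ[ℂ] ℂ))
    (R : Fin ℓ → Matrix (Fin m) (Fin m) ℂ)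
    (hψ : ∀ j, IsState d (ψ j))
    (hψdist : ∀ j j', ψ j = ψ j' → j = j')
    (hR : ∀ j, (R j).PosSemidef)
    (hRsum : ∑ j, R j = 1)
    (hΨ : ∀ X, Ψ X = ∑ j, ψ j X • R j)
    (V : Matrix (Fin m) (Fin n) ℂ) (hV : Vᴴ * V = 1)
    (hdil : ∀ X, Vᴴ * Ψ X * V = Φ X) :
    ∀ (X : Matrix (Fin d) (Fin d) ℂ) (x : Fin n → ℂ),
      ∃ y : Fin n → ℂ, Ψ X *ᵥ (V *ᵥ x) = V *ᵥ y := by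
  -- Core: any vector in the range of `P i` is killed by `R j` (after `V`) unless `ψ j = φ i`.
  have core : ∀ (i : Fin k) (u : Fin n → ℂ), P i *ᵥ u = u →
      ∀ j, ψ j ≠ φ i → R j *ᵥ (V *ᵥ u) = 0 := by
    intro i u hu j hne
    rcases eq_or_ne u 0 with rfl | hu0
    · simp
    set w := V *ᵥ u with hw
    set c : Fin ℓ → ℝ := fun j' => (star w ⬝ᵥ (R j' *ᵥ w)).re with hcdef
    have hcnonnegC : ∀ j', 0 ≤ star w ⬝ᵥ (R j' *ᵥ w) := fun j' => (hR j').dotProduct_mulVec_nonneg w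
    have hcC : ∀ j', star w ⬝ᵥ (R j' *ᵥ w) = ((c j' : ℝ) : ℂ) := by
      intro j'
      have him : (star w ⬝ᵥ (R j' *ᵥ w)).im = 0 :=
        (Complex.nonneg_iff.mp (hcnonnegC j')).2.symm
      exact Complex.ext rfl (by simp [him])
    have hcnonneg : ∀ j', 0 ≤ c j' := by
      intro j'
      exact (Complex.nonneg_iff.mp (hcnonnegC j')).1
    -- the squared norm
    have hww : star w ⬝ᵥ w = star u ⬝ᵥ u := by
      have := conj_dot V 1 u
      rwa [Matrix.mul_one, hV, one_mulVec, one_mulVec] at this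
    have hsnonneg : 0 ≤ star u ⬝ᵥ u := dotProduct_star_self_nonneg u
    set s : ℝ := (star u ⬝ᵥ u).re with hsdef
    have hsC : star u ⬝ᵥ u = ((s : ℝ) : ℂ) := by
      have him : (star u ⬝ᵥ u).im = 0 := (Complex.nonneg_iff.mp hsnonneg).2.symm
      exact Complex.ext rfl (by simp [him])
    have hspos : 0 < s := by
      rcases lt_or_eq_of_le (Complex.nonneg_iff.mp hsnonneg).1 with h | h
      · exact h
      · exfalso
        apply hu0
        apply dotProduct_star_self_eq_zero.mp
        rw [hsC, hsdef, ← h]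
        simp
    -- sum of the coefficients is s
    have hcsum : ∑ j', c j' = s := by
      have h1 : ∑ j', star w ⬝ᵥ (R j' *ᵥ w) = star u ⬝ᵥ u := by
        rw [← dot_sum', ← sum_mulVec', hRsum, one_mulVec, hww]
      rw [Finset.sum_congr rfl (fun j' _ => hcC j'), hsC] at h1
      exact_mod_cast h1
    -- the convex-combination identity
    have hid : ∀ X, ∑ j', ((c j' : ℝ) : ℂ) * ψ j' X = ((s : ℝ) : ℂ) * φ i X := by
      intro X
      have h1 : ∑ j', star w ⬝ᵥ ((ψ j' X • R j') *ᵥ w) = star w ⬝ᵥ (Ψ X *ᵥ w) := by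
        rw [← dot_sum', ← sum_mulVec', ← hΨ X]
      have h2 : star w ⬝ᵥ (Ψ X *ᵥ w) = star u ⬝ᵥ (Φ X *ᵥ u) := by
        rw [hw, conj_dot, hdil X]
      have h3 : star u ⬝ᵥ (Φ X *ᵥ u) = ((s : ℝ) : ℂ) * φ i X := by
        rw [hΦ X, sum_mulVec', dot_sum']
        rw [Finset.sum_eq_single i]
        · rw [smul_mulVec, dotProduct_smul, hu, smul_eq_mul, hsC]; ring
        · intro t _ hti
          have : P t *ᵥ u = 0 := by
            rw [← hu, mulVec_mulVec, horth t i hti, zero_mulVec]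
          rw [smul_mulVec, this, smul_zero, dotProduct_zero]
        · intro h; exact absurd (Finset.mem_univ i) h
      have h4 : ∀ j', star w ⬝ᵥ ((ψ j' X • R j') *ᵥ w) = ((c j' : ℝ) : ℂ) * ψ j' X := by
        intro j'
        rw [smul_mulVec, dotProduct_smul, smul_eq_mul, hcC]
        ring
      rw [← Finset.sum_congr rfl (fun j' _ => h4 j'), h1, h2, h3]
    have hcj : c j = 0 :=
      pure_convex (φ i) (hφ i) ψ hψ c hcnonneg s hspos hcsum hid j hne
    have : star w ⬝ᵥ (R j *ᵥ w) = 0 := by rw [hcC j, hcj]; simp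
    exact ((hR j).dotProduct_mulVec_zero_iff w).mp this
  -- Step 2: on the range of each P i, Ψ(X) acts on V u as the scalar φ i X.
  have step2 : ∀ (i : Fin k) (u : Fin n → ℂ), P i *ᵥ u = u →
      ∀ X, Ψ X *ᵥ (V *ᵥ u) = V *ᵥ (φ i X • u) := by
    intro i u hu X
    have h1 : ∀ j, (ψ j X • R j) *ᵥ (V *ᵥ u) = φ i X • (R j *ᵥ (V *ᵥ u)) := by
      intro j
      by_cases h : ψ j = φ i
      · rw [smul_mulVec, h]
      · rw [smul_mulVec, core i u hu j h, smul_zero, smul_zero]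
    rw [hΨ X, sum_mulVec', Finset.sum_congr rfl (fun j _ => h1 j), ← Finset.smul_sum,
      ← sum_mulVec', hRsum, one_mulVec, mulVec_smul]
  -- Conclusion
  intro X x
  refine ⟨Φ X *ᵥ x, ?_⟩
  have hx : x = ∑ i, P i *ᵥ x := by
    rw [← sum_mulVec', hPsum, one_mulVec]
  conv_lhs => rw [hx]
  rw [mulVec_sum', mulVec_sum']
  have h1 : ∀ i, Ψ X *ᵥ (V *ᵥ (P i *ᵥ x)) = V *ᵥ (φ i X • (P i *ᵥ x)) := by
    intro i
    apply step2 i (P i *ᵥ x) _ X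
    rw [mulVec_mulVec, (hproj i).1]
  have h2 : (∑ i, φ i X • (P i *ᵥ x)) = ∑ i, (φ i X • P i) *ᵥ x :=
    Finset.sum_congr rfl fun i _ => (smul_mulVec (φ i X) (P i) x).symm
  rw [Finset.sum_congr rfl (fun i _ => h1 i), ← mulVec_sum', h2, ← sum_mulVec', ← hΦ X]
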